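/- Let 0 < ε, 0 < r, with ε ≤ r/16. Points o, u, v, p in the plane satisfy: |pu| = r, |uv| ≤ 10rδ₂, and the angle γ = ∠puv satisfies |π/2 − γ| ≤ 3δ₁/r + πδ₂, where δ₁, δ₂ > 0 with δ₁δ₂ = √2·ε and δ₂ ≤ √(ε/r). Then ||pv| − r| ≤ C·ε for an absolute constant C. -/

import Mathlib

open Real EuclideanGeometry

/-- There is an absolute constant C such that: for 0 < ε, 0 < r with ε ≤ r/16, and
parameters δ₁, δ₂ > 0 with δ₁δ₂ = √2·ε and δ₂ ≤ √(ε/r), if points p, u, v in the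
plane satisfy |pu| = r, |uv| ≤ 10rδ₂, and the angle γ = ∠puv satisfies
|π/2 − γ| ≤ 3δ₁/r + πδ₂, then ||pv| − r| ≤ C·ε. -/
theorem stmt19 : ∃ C : ℝ, 0 < C ∧
    ∀ (ε r δ₁ δ₂ : ℝ) (p u v : EuclideanSpace ℝ (Fin 2)),
      0 < ε → 0 < r → ε ≤ r / 16 → 0 < δ₁ → 0 < δ₂ →
      δ₁ * δ₂ = Real.sqrt 2 * ε → δ₂ ≤ Real.sqrt (ε / r) →
      dist p u = r → dist u v ≤ 10 * r * δ₂ →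
      |π / 2 - ∠ p u v| ≤ 3 * δ₁ / r + π * δ₂ →
      |dist p v - r| ≤ C * ε := by
  refine ⟨300, by norm_num, ?_⟩
  intro ε r δ₁ δ₂ p u v hε hr hεr hδ₁ hδ₂ hprod hsq hpu huv hang
  have hcos : |Real.cos (∠ p u v)| ≤ 3 * δ₁ / r + π * δ₂ := by
    have : Real.cos (∠ p u v) = Real.sin (π / 2 - ∠ p u v) := by
      rw [Real.sin_pi_div_two_sub]
    rw [this]
    exact (Real.abs_sin_le_abs).trans hang
  have hlc := EuclideanGeometry.law_cos p u v
  rw [dist_comm v u, hpu] at hlc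
  -- hlc : dist p v * dist p v = r * r + dist u v * dist u v - 2*r*dist u v*cos
  have hd2 : δ₂ ^ 2 ≤ ε / r := by
    have h := Real.sq_sqrt (div_pos hε hr).le
    have h2 := mul_self_le_mul_self hδ₂.le hsq
    nlinarith
  have hs2 : Real.sqrt 2 ≤ 1.5 := by
    rw [show (1.5 : ℝ) = Real.sqrt (1.5 ^ 2) by rw [Real.sqrt_sq]; norm_num]
    exact Real.sqrt_le_sqrt (by norm_num)
  have hδ₁δ₂ : δ₁ * δ₂ ≤ 1.5 * ε := by
    rw [hprod]; exact mul_le_mul_of_nonneg_right hs2 hε.le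
  have hpi : π ≤ 4 := Real.pi_le_four
  have hduv : 0 ≤ dist u v := dist_nonneg
  have hdpv : 0 ≤ dist p v := dist_nonneg
  -- bound |pv² - r²|
  have hkey : |dist p v * dist p v - r * r| ≤ 300 * r * ε := by
    have e0 : dist p v * dist p v - r * r =
        dist u v * dist u v - 2 * r * dist u v * Real.cos (∠ p u v) := by linarith
    have e1 : |dist p v * dist p v - r * r| ≤
        dist u v * dist u v + 2 * r * dist u v * |Real.cos (∠ p u v)| := by
      rw [e0]
      calc |dist u v * dist u v - 2 * r * dist u v * Real.cos (∠ p u v)|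
          ≤ |dist u v * dist u v| + |2 * r * dist u v * Real.cos (∠ p u v)| :=
            abs_sub _ _
        _ = dist u v * dist u v + 2 * r * dist u v * |Real.cos (∠ p u v)| := by
            rw [abs_of_nonneg (mul_nonneg hduv hduv), abs_mul,
              abs_of_nonneg (by positivity : (0:ℝ) ≤ 2 * r * dist u v)]
    have h1 : 2 * r * dist u v * |Real.cos (∠ p u v)| ≤
        2 * r * (10 * r * δ₂) * (3 * δ₁ / r + π * δ₂) := by
      apply mul_le_mul
      · exact mul_le_mul_of_nonneg_left huv (by positivity)
      · exact hcos
      · exact abs_nonneg _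
      · positivity
    have h2 : 2 * r * (10 * r * δ₂) * (3 * δ₁ / r + π * δ₂) =
        60 * r * (δ₁ * δ₂) + 20 * π * (r ^ 2 * δ₂ ^ 2) := by
      field_simp; ring
    have h3 : r ^ 2 * δ₂ ^ 2 ≤ r * ε := by
      calc r ^ 2 * δ₂ ^ 2 ≤ r ^ 2 * (ε / r) :=
            mul_le_mul_of_nonneg_left hd2 (by positivity)
        _ = r * ε := by field_simp
    have h4 : dist u v * dist u v ≤ 100 * (r * ε) := by
      have := mul_self_le_mul_self hduv huv
      nlinarith
    have h5 : 60 * r * (δ₁ * δ₂) ≤ 90 * (r * ε) := by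
      have := mul_le_mul_of_nonneg_left hδ₁δ₂ hr.le
      nlinarith
    have h6 : 20 * π * (r ^ 2 * δ₂ ^ 2) ≤ 80 * (r * ε) := by
      have hp0 : 0 ≤ r ^ 2 * δ₂ ^ 2 := by positivity
      have := mul_le_mul hpi h3 hp0 (by norm_num : (0:ℝ) ≤ 4)
      linarith
    have h7 : 2 * r * dist u v * |Real.cos (∠ p u v)| ≤ 170 * (r * ε) := by
      rw [h2] at h1; linarith
    calc |dist p v * dist p v - r * r|
        ≤ dist u v * dist u v + 2 * r * dist u v * |Real.cos (∠ p u v)| := e1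
      _ ≤ 100 * (r * ε) + 170 * (r * ε) := by linarith
      _ ≤ 300 * r * ε := by
          have h0 : (0:ℝ) < r * ε := mul_pos hr hε
          have he : (300:ℝ) * r * ε = 300 * (r * ε) := by ring
          rw [he]; linarith
  have hfact : |dist p v - r| * r ≤ |dist p v * dist p v - r * r| := by
    have : |dist p v * dist p v - r * r| = |dist p v - r| * (dist p v + r) := by
      rw [← abs_of_nonneg (by linarith : (0:ℝ) ≤ dist p v + r), ← abs_mul]
      ring_nf
    rw [this]
    apply mul_le_mul_of_nonneg_left (by linarith) (abs_nonneg _)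
  have : |dist p v - r| * r ≤ 300 * r * ε := hfact.trans hkey
  refine (mul_le_mul_iff_left₀ hr).mp ?_
  calc |dist p v - r| * r ≤ 300 * r * ε := this
    _ = 300 * ε * r := by ring
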